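/- Sklar's theorem (existence, continuous case): if X_1,...,X_N have joint CDF D and continuous marginal CDFs F_i, then there exists a unique copula C (a joint CDF on [0,1]^N with uniform marginals) such that D(x_1,...,x_N) = C(F_1(x_1),...,F_N(x_N)) for all x. -/

import Mathlib

open MeasureTheory Real

open MeasureTheory Real Filter Topology Set
open scoped ENNReal
set_option linter.unusedSectionVars false

section Aux

variable {Ω : Type*} [MeasureSpace Ω] [IsProbabilityMeasure (volume : Measure Ω)]
variable {Y : Ω → ℝ} {F : ℝ → ℝ}

theorem sklarF_mono (hFd : ∀ t, F t = ((volume : Measure Ω) {ω | Y ω ≤ t}).toReal) :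
    Monotone F := by
  intro a b hab
  rw [hFd a, hFd b]
  exact ENNReal.toReal_mono (measure_ne_top _ _)
    (measure_mono fun ω h => le_trans h hab)

theorem sklarF_ofReal (hFd : ∀ t, F t = ((volume : Measure Ω) {ω | Y ω ≤ t}).toReal) (t : ℝ) :
    (volume : Measure Ω) {ω | Y ω ≤ t} = ENNReal.ofReal (F t) := by
  rw [hFd t, ENNReal.ofReal_toReal (measure_ne_top _ _)]

theorem sklarF_nonneg (hFd : ∀ t, F t = ((volume : Measure Ω) {ω | Y ω ≤ t}).toReal) (t : ℝ) :
    0 ≤ F t := by rw [hFd]; exact ENNReal.toReal_nonneg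

theorem sklarF_le_one (hFd : ∀ t, F t = ((volume : Measure Ω) {ω | Y ω ≤ t}).toReal) (t : ℝ) :
    F t ≤ 1 := by
  rw [hFd]
  exact ENNReal.toReal_le_of_le_ofReal zero_le_one (by simpa using prob_le_one)

theorem sklarF_tendsto_atTop (hY : Measurable Y)
    (hFd : ∀ t, F t = ((volume : Measure Ω) {ω | Y ω ≤ t}).toReal) :
    Tendsto (fun n : ℕ => F n) atTop (𝓝 1) := by
  have h1 : Tendsto (fun n : ℕ => (volume : Measure Ω) {ω | Y ω ≤ (n:ℝ)}) atTop
      (𝓝 ((volume : Measure Ω) (⋃ n : ℕ, {ω | Y ω ≤ (n:ℝ)}))) :=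
    tendsto_measure_iUnion_atTop (fun a b hab ω h =>
      show Y ω ≤ (b:ℝ) from le_trans h (Nat.cast_le.mpr hab))
  have h2 : (⋃ n : ℕ, {ω : Ω | Y ω ≤ (n:ℝ)}) = univ := by
    ext ω; simp only [mem_iUnion, mem_setOf_eq, mem_univ, iff_true]
    obtain ⟨n, hn⟩ := exists_nat_ge (Y ω)
    exact ⟨n, hn⟩
  rw [h2, measure_univ] at h1
  have := (ENNReal.tendsto_toReal (by norm_num)).comp h1
  simpa [hFd, Function.comp_def] using this

theorem sklarF_tendsto_atBot (hY : Measurable Y)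
    (hFd : ∀ t, F t = ((volume : Measure Ω) {ω | Y ω ≤ t}).toReal) :
    Tendsto (fun n : ℕ => F (-(n:ℝ))) atTop (𝓝 0) := by
  have h1 : Tendsto (fun n : ℕ => (volume : Measure Ω) {ω | Y ω ≤ -(n:ℝ)}) atTop
      (𝓝 ((volume : Measure Ω) (⋂ n : ℕ, {ω | Y ω ≤ -(n:ℝ)}))) := by
    refine tendsto_measure_iInter_atTop
      (fun n => ((hY measurableSet_Iic) : MeasurableSet {ω | Y ω ≤ -(n:ℝ)}).nullMeasurableSet)
      (fun a b hab ω h => show Y ω ≤ -(a:ℝ) from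
        le_trans h (neg_le_neg (Nat.cast_le.mpr hab)))
      ⟨0, measure_ne_top _ _⟩
  have h2 : (⋂ n : ℕ, {ω : Ω | Y ω ≤ -(n:ℝ)}) = ∅ := by
    ext ω; simp only [mem_iInter, mem_setOf_eq, mem_empty_iff_false, iff_false, not_forall]
    obtain ⟨n, hn⟩ := exists_nat_gt (-Y ω)
    exact ⟨n, by push_cast; linarith⟩
  rw [h2, measure_empty] at h1
  have := (ENNReal.tendsto_toReal (by norm_num)).comp h1
  simpa [hFd, Function.comp_def] using this

/-- Key null set lemma. -/
theorem sklar_key (hY : Measurable Y)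
    (hFd : ∀ t, F t = ((volume : Measure Ω) {ω | Y ω ≤ t}).toReal)
    (hFc : Continuous F) (s : ℝ) :
    (volume : Measure Ω) {ω | F (Y ω) ≤ F s ∧ s < Y ω} = 0 := by
  have hmono := sklarF_mono hFd
  by_cases hB : ∀ r, F r ≤ F s
  · -- F s = 1, so {s < Y} is null
    have hFs1 : (1:ℝ) ≤ F s := le_of_tendsto (sklarF_tendsto_atTop hY hFd)
      (Eventually.of_forall fun n => hB _)
    have h1 : (volume : Measure Ω) {ω | Y ω ≤ s} = 1 := by
      refine le_antisymm prob_le_one ?_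
      rw [sklarF_ofReal hFd]
      calc (1:ℝ≥0∞) = ENNReal.ofReal 1 := by simp
        _ ≤ ENNReal.ofReal (F s) := ENNReal.ofReal_le_ofReal hFs1
    have hms : MeasurableSet {ω : Ω | Y ω ≤ s} := hY measurableSet_Iic
    have : (volume : Measure Ω) {ω | Y ω ≤ s}ᶜ = 0 := by
      rw [measure_compl hms (measure_ne_top _ _), h1, measure_univ, tsub_self]
    refine measure_mono_null (fun ω h => ?_) this
    exact not_le.2 h.2
  · push_neg at hB
    obtain ⟨r, hr⟩ := hB
    set B : Set ℝ := {t | F t ≤ F s} with hBdef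
    have hsB : s ∈ B := show F s ≤ F s from le_refl _
    have hbdd : BddAbove B := ⟨r, fun t ht => by
      by_contra hc; push_neg at hc
      exact absurd (le_trans (hmono hc.le) ht) (not_le.2 hr)⟩
    have hclosed : IsClosed B := isClosed_le hFc continuous_const
    have hbmem : sSup B ∈ B := hclosed.csSup_mem ⟨s, hsB⟩ hbdd
    set b := sSup B with hb
    have hsb : s ≤ b := le_csSup hbdd hsB
    have hsub : {ω | F (Y ω) ≤ F s ∧ s < Y ω} ⊆ {ω | Y ω ≤ b} \ {ω | Y ω ≤ s} := by
      intro ω ⟨h1, h2⟩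
      exact ⟨le_csSup hbdd h1, not_le.2 h2⟩
    refine measure_mono_null hsub ?_
    have hd := measure_diff (μ := (volume : Measure Ω)) (s₁ := {ω | Y ω ≤ b})
      (s₂ := {ω | Y ω ≤ s}) (fun ω h => le_trans h hsb)
      ((hY measurableSet_Iic : MeasurableSet {ω : Ω | Y ω ≤ s})).nullMeasurableSet
      (measure_ne_top _ _)
    rw [hd, sklarF_ofReal hFd, sklarF_ofReal hFd]
    have : F b ≤ F s := hbmem
    simp [tsub_eq_zero_of_le, ENNReal.ofReal_le_ofReal this]

theorem sklar_measure_F_le (hY : Measurable Y)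
    (hFd : ∀ t, F t = ((volume : Measure Ω) {ω | Y ω ≤ t}).toReal)
    (hFc : Continuous F) (s : ℝ) :
    (volume : Measure Ω) {ω | F (Y ω) ≤ F s} = (volume : Measure Ω) {ω | Y ω ≤ s} := by
  refine le_antisymm ?_ (measure_mono fun ω h => sklarF_mono hFd h)
  have hsub : {ω : Ω | F (Y ω) ≤ F s} ⊆
      {ω | Y ω ≤ s} ∪ {ω | F (Y ω) ≤ F s ∧ s < Y ω} := by
    intro ω h
    rcases le_or_gt (Y ω) s with h' | h'
    · exact Or.inl h'
    · exact Or.inr ⟨h, h'⟩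
  calc (volume : Measure Ω) {ω | F (Y ω) ≤ F s}
      ≤ (volume : Measure Ω) {ω | Y ω ≤ s} + (volume : Measure Ω) {ω | F (Y ω) ≤ F s ∧ s < Y ω} :=
        le_trans (measure_mono hsub) (measure_union_le _ _)
    _ = (volume : Measure Ω) {ω | Y ω ≤ s} := by rw [sklar_key hY hFd hFc s, add_zero]

theorem sklar_exists_F_eq (hY : Measurable Y)
    (hFd : ∀ t, F t = ((volume : Measure Ω) {ω | Y ω ≤ t}).toReal)
    (hFc : Continuous F) {t : ℝ} (ht : t ∈ Ioo (0:ℝ) 1) : ∃ s, F s = t := by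
  obtain ⟨n, hn⟩ := ((sklarF_tendsto_atBot hY hFd).eventually_lt_const ht.1).exists
  obtain ⟨m, hm⟩ := ((sklarF_tendsto_atTop hY hFd).eventually_const_lt ht.2).exists
  have hab : -(n:ℝ) ≤ (m:ℝ) := by
    by_contra hc; push_neg at hc
    exact absurd (sklarF_mono hFd hc.le) (not_le.2 (lt_trans hn hm))
  have := intermediate_value_Icc hab hFc.continuousOn
  obtain ⟨s, _, hs⟩ := this ⟨hn.le, hm.le⟩
  exact ⟨s, hs⟩

end Aux

section Aux2
variable {Ω : Type*} [MeasureSpace Ω] [IsProbabilityMeasure (volume : Measure Ω)]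
variable {Y : Ω → ℝ} {F : ℝ → ℝ}

theorem sklar_map_eq (hY : Measurable Y)
    (hFd : ∀ t, F t = ((volume : Measure Ω) {ω | Y ω ≤ t}).toReal)
    (hFc : Continuous F) :
    Measure.map (fun ω => F (Y ω)) volume = (volume : Measure ℝ).restrict (Icc (0:ℝ) 1) := by
  have hmeas : Measurable fun ω => F (Y ω) := hFc.measurable.comp hY
  haveI : IsProbabilityMeasure (Measure.map (fun ω => F (Y ω)) volume) :=
    Measure.isProbabilityMeasure_map hmeas.aemeasurable
  refine Measure.ext_of_Iic _ _ fun t => ?_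
  rw [Measure.map_apply hmeas measurableSet_Iic, Measure.restrict_apply measurableSet_Iic]
  rcases lt_or_ge t 0 with ht | ht
  · have h1 : (fun ω => F (Y ω)) ⁻¹' Iic t = ∅ := by
      ext ω; simp only [mem_preimage, mem_Iic, mem_empty_iff_false, iff_false, not_le]
      exact lt_of_lt_of_le ht (sklarF_nonneg hFd _)
    have h2 : Iic t ∩ Icc (0:ℝ) 1 = ∅ := by
      ext x; simp only [mem_inter_iff, mem_Iic, mem_Icc, mem_empty_iff_false, iff_false]
      rintro ⟨h1', h2', _⟩; linarith
    rw [h1, h2]; simp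
  rcases lt_or_ge t 1 with ht1 | ht1
  · have h2 : Iic t ∩ Icc (0:ℝ) 1 = Icc 0 t := by
      ext x; simp only [mem_inter_iff, mem_Iic, mem_Icc]; constructor
      · rintro ⟨a, b, c⟩; exact ⟨b, a⟩
      · rintro ⟨a, b⟩; exact ⟨b, a, by linarith⟩
    rw [h2, Real.volume_Icc, sub_zero]
    rcases eq_or_lt_of_le ht with ht0 | ht0
    · subst ht0
      rw [ENNReal.ofReal_zero]
      have key : ∀ n : ℕ, (volume : Measure Ω) ((fun ω => F (Y ω)) ⁻¹' Iic 0)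
          ≤ ENNReal.ofReal (1/((n:ℝ)+2)) := by
        intro n
        have hmem : (1:ℝ)/((n:ℝ)+2) ∈ Ioo (0:ℝ) 1 := by
          constructor
          · positivity
          · rw [div_lt_one (by positivity)]; linarith
        obtain ⟨s, hs⟩ := sklar_exists_F_eq hY hFd hFc hmem
        calc (volume : Measure Ω) ((fun ω => F (Y ω)) ⁻¹' Iic 0)
            ≤ (volume : Measure Ω) {ω | F (Y ω) ≤ F s} := by
              refine measure_mono fun ω h => ?_
              simp only [mem_preimage, mem_Iic] at h
              rw [hs]; exact le_trans h hmem.1.le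
          _ = (volume : Measure Ω) {ω | Y ω ≤ s} := sklar_measure_F_le hY hFd hFc s
          _ = ENNReal.ofReal (F s) := sklarF_ofReal hFd s
          _ = ENNReal.ofReal (1/((n:ℝ)+2)) := by rw [hs]
      have htend : Tendsto (fun n : ℕ => ENNReal.ofReal (1/((n:ℝ)+2))) atTop (𝓝 0) := by
        rw [show (0:ℝ≥0∞) = ENNReal.ofReal 0 by simp]
        refine ENNReal.tendsto_ofReal ?_
        have h := (tendsto_add_atTop_iff_nat 1).2 (tendsto_one_div_add_atTop_nhds_zero_nat (𝕜 := ℝ))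
        convert h using 2 with n
        push_cast; ring
      exact le_antisymm (ge_of_tendsto htend (Eventually.of_forall key)) (zero_le)
    · obtain ⟨s, hs⟩ := sklar_exists_F_eq hY hFd hFc ⟨ht0, ht1⟩
      have heq : (fun ω => F (Y ω)) ⁻¹' Iic t = {ω | F (Y ω) ≤ F s} := by rw [hs]; rfl
      rw [heq, sklar_measure_F_le hY hFd hFc, sklarF_ofReal hFd, hs]
  · have h1 : (fun ω => F (Y ω)) ⁻¹' Iic t = univ := by
      ext ω; simp only [mem_preimage, mem_Iic, mem_univ, iff_true]
      exact le_trans (sklarF_le_one hFd _) ht1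
    have h2 : Iic t ∩ Icc (0:ℝ) 1 = Icc 0 1 :=
      inter_eq_self_of_subset_right (fun x hx => le_trans hx.2 ht1)
    rw [h1, h2, measure_univ, Real.volume_Icc]; norm_num

end Aux2

section Copula
variable {N : ℕ} {μ : Measure (Fin N → ℝ)}

theorem copula_marg_apply
    (hmarg : ∀ i, Measure.map (fun u => u i) μ = (volume : Measure ℝ).restrict (Icc (0:ℝ) 1))
    (i : Fin N) {s : Set ℝ} (hs : MeasurableSet s) :
    μ ((fun v => v i) ⁻¹' s) = (volume : Measure ℝ) (s ∩ Icc 0 1) := by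
  rw [← Measure.map_apply (measurable_pi_apply i) hs, hmarg i, Measure.restrict_apply hs]

theorem copula_coord_one
    (hmarg : ∀ i, Measure.map (fun u => u i) μ = (volume : Measure ℝ).restrict (Icc (0:ℝ) 1))
    (i : Fin N) : μ {v | 1 ≤ v i} = 0 := by
  have h := copula_marg_apply hmarg i (measurableSet_Ici (a := (1:ℝ)))
  have h2 : Ici (1:ℝ) ∩ Icc 0 1 = {1} := by
    ext x; simp only [mem_inter_iff, mem_Ici, mem_Icc, mem_singleton_iff]
    constructor
    · rintro ⟨a, _, c⟩; linarith
    · rintro rfl; norm_num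
  have : μ {v | 1 ≤ v i} = μ ((fun v => v i) ⁻¹' Ici 1) := rfl
  rw [this, h, h2, Real.volume_singleton]

theorem copula_zero
    (hmarg : ∀ i, Measure.map (fun u => u i) μ = (volume : Measure ℝ).restrict (Icc (0:ℝ) 1))
    (u : Fin N → ℝ) (i : Fin N) (hui : u i ≤ 0) :
    μ {v | ∀ j, v j ≤ u j} = 0 := by
  have h := copula_marg_apply hmarg i (measurableSet_Iic (a := (0:ℝ)))
  have h2 : Iic (0:ℝ) ∩ Icc 0 1 = {0} := by
    ext x; simp only [mem_inter_iff, mem_Iic, mem_Icc, mem_singleton_iff]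
    constructor
    · rintro ⟨a, b, _⟩; linarith
    · rintro rfl; norm_num
  refine measure_mono_null (fun v hv => ?_) (by rw [h, h2, Real.volume_singleton])
  exact le_trans (hv i) hui

theorem copula_tendsto [IsProbabilityMeasure μ]
    (hmarg : ∀ i, Measure.map (fun u => u i) μ = (volume : Measure ℝ).restrict (Icc (0:ℝ) 1))
    (u : Fin N → ℝ) :
    Tendsto (fun n : ℕ => μ {v | ∀ i, v i ≤ min (u i) (1 - 1/((n:ℝ)+2))}) atTop
      (𝓝 (μ {v | ∀ i, v i ≤ u i})) := by
  have hfrac : Tendsto (fun n : ℕ => 1/((n:ℝ)+2)) atTop (𝓝 0) := by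
    have h := (tendsto_add_atTop_iff_nat 1).2 (tendsto_one_div_add_atTop_nhds_zero_nat (𝕜 := ℝ))
    convert h using 2 with n
    push_cast; ring
  set S : ℕ → Set (Fin N → ℝ) := fun n => {v | ∀ i, v i ≤ min (u i) (1 - 1/((n:ℝ)+2))} with hS
  have hmonoS : Monotone S := by
    intro a b hab v hv i
    refine le_min ((hv i).trans (min_le_left _ _)) ((hv i).trans ((min_le_right _ _).trans ?_))
    have : (1:ℝ)/((b:ℝ)+2) ≤ 1/((a:ℝ)+2) := by
      apply one_div_le_one_div_of_le (by positivity)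
      have : (a:ℝ) ≤ b := Nat.cast_le.mpr hab
      linarith
    linarith
  have htend := tendsto_measure_iUnion_atTop (μ := μ) hmonoS
  have hU : μ (⋃ n, S n) = μ {v | ∀ i, v i ≤ u i} := by
    refine le_antisymm (measure_mono (iUnion_subset fun n v hv i =>
      (hv i).trans (min_le_left _ _))) ?_
    have hsub : {v : Fin N → ℝ | ∀ i, v i ≤ u i} ⊆
        (⋃ n, S n) ∪ ⋃ i, {v : Fin N → ℝ | 1 ≤ v i} := by
      intro v hv
      rcases em (∃ i, 1 ≤ v i) with ⟨i, hi⟩ | hlt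
      · exact Or.inr (mem_iUnion.2 ⟨i, hi⟩)
      · push_neg at hlt
        left
        have hev : ∀ᶠ n : ℕ in atTop, ∀ i, 1/((n:ℝ)+2) < 1 - v i :=
          eventually_all.2 fun i => hfrac.eventually_lt_const (by linarith [hlt i])
        obtain ⟨n, hn⟩ := hev.exists
        exact mem_iUnion.2 ⟨n, fun i => le_min (hv i) (by linarith [hn i])⟩
    calc μ {v | ∀ i, v i ≤ u i}
        ≤ μ (⋃ n, S n) + μ (⋃ i, {v : Fin N → ℝ | 1 ≤ v i}) :=
          (measure_mono hsub).trans (measure_union_le _ _)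
      _ = μ (⋃ n, S n) := by
          rw [measure_iUnion_null fun i => copula_coord_one hmarg i, add_zero]
  rw [← hU]
  exact htend

end Copula


/-- **Sklar's theorem (existence and uniqueness, continuous case).** If
`X_1, ..., X_N` have joint CDF `D` and continuous marginal CDFs `F i`, then
there exists a unique copula `C` — the CDF of a probability measure on `[0,1]^N`
with all one-dimensional marginals uniform on `[0,1]` — such that
`D(x) = C(F_1(x_1), ..., F_N(x_N))` for all `x`. -/
theorem sklar_continuous
    {N : ℕ} {Ω : Type*} [MeasureSpace Ω] [IsProbabilityMeasure (volume : Measure Ω)]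
    (X : Ω → (Fin N → ℝ)) (hX : Measurable X)
    (D : (Fin N → ℝ) → ℝ) (F : Fin N → ℝ → ℝ)
    -- `D` is the joint CDF of `X`
    (hD : ∀ x, D x = ((volume : Measure Ω) {ω | ∀ i, X ω i ≤ x i}).toReal)
    -- `F i` is the marginal CDF of `X_i`, continuous
    (hF : ∀ i t, F i t = ((volume : Measure Ω) {ω | X ω i ≤ t}).toReal)
    (hFcont : ∀ i, Continuous (F i)) :
    ∃! C : (Fin N → ℝ) → ℝ,
      (∃ μ : Measure (Fin N → ℝ), IsProbabilityMeasure μ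
        ∧ μ (Set.univ.pi fun _ : Fin N => Set.Icc (0:ℝ) 1)ᶜ = 0
        ∧ (∀ i, Measure.map (fun u => u i) μ = volume.restrict (Set.Icc (0:ℝ) 1))
        ∧ ∀ u, C u = (μ {v | ∀ i, v i ≤ u i}).toReal)
      ∧ ∀ x, D x = C (fun i => F i (x i)) := by
  classical
  have hXi : ∀ i, Measurable fun ω => X ω i := fun i => (measurable_pi_apply i).comp hX
  set g : Ω → (Fin N → ℝ) := fun ω i => F i (X ω i) with hg
  have hgmeas : Measurable g := measurable_pi_iff.2 fun i => (hFcont i).measurable.comp (hXi i)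
  set μ0 := Measure.map g volume with hμ0
  haveI hP0 : IsProbabilityMeasure μ0 := Measure.isProbabilityMeasure_map hgmeas.aemeasurable
  set C0 : (Fin N → ℝ) → ℝ := fun u => (μ0 {v | ∀ i, v i ≤ u i}).toReal with hC0
  have hsetm : ∀ u : Fin N → ℝ, MeasurableSet {v : Fin N → ℝ | ∀ i, v i ≤ u i} := by
    intro u
    have h : {v : Fin N → ℝ | ∀ i, v i ≤ u i} = ⋂ i, (fun v => v i) ⁻¹' Iic (u i) := by
      ext v; simp [mem_iInter]
    rw [h]
    exact MeasurableSet.iInter fun i => measurable_pi_apply i measurableSet_Iic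
  have hmargs : ∀ i, Measure.map (fun u => u i) μ0 = volume.restrict (Icc (0:ℝ) 1) := by
    intro i
    rw [hμ0, Measure.map_map (measurable_pi_apply i) hgmeas]
    exact sklar_map_eq (hXi i) (hF i) (hFcont i)
  have hsupp : μ0 (Set.univ.pi fun _ : Fin N => Icc (0:ℝ) 1)ᶜ = 0 := by
    rw [hμ0, Measure.map_apply hgmeas (MeasurableSet.univ_pi fun _ => measurableSet_Icc).compl]
    have h : g ⁻¹' (Set.univ.pi fun _ : Fin N => Icc (0:ℝ) 1)ᶜ = ∅ := by
      ext ω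
      simp only [mem_preimage, mem_compl_iff, mem_univ_pi, mem_empty_iff_false, iff_false,
        not_not]
      exact fun i => ⟨sklarF_nonneg (hF i) _, sklarF_le_one (hF i) _⟩
    rw [h, measure_empty]
  have hDeq : ∀ x, D x = C0 (fun i => F i (x i)) := by
    intro x
    rw [hD x]
    show _ = (μ0 {v | ∀ i, v i ≤ F i (x i)}).toReal
    congr 1
    rw [hμ0, Measure.map_apply hgmeas (hsetm _)]
    refine le_antisymm (measure_mono fun ω h i => sklarF_mono (hF i) (h i)) ?_
    have hsub : g ⁻¹' {v : Fin N → ℝ | ∀ i, v i ≤ F i (x i)} ⊆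
        {ω | ∀ i, X ω i ≤ x i} ∪ ⋃ i, {ω | F i (X ω i) ≤ F i (x i) ∧ x i < X ω i} := by
      intro ω h
      rcases em (∀ i, X ω i ≤ x i) with h' | h'
      · exact Or.inl h'
      · push_neg at h'
        obtain ⟨i, hi⟩ := h'
        exact Or.inr (mem_iUnion.2 ⟨i, h i, hi⟩)
    calc (volume : Measure Ω) (g ⁻¹' {v : Fin N → ℝ | ∀ i, v i ≤ F i (x i)})
        ≤ (volume : Measure Ω) {ω | ∀ i, X ω i ≤ x i}
          + (volume : Measure Ω) (⋃ i, {ω | F i (X ω i) ≤ F i (x i) ∧ x i < X ω i}) :=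
          (measure_mono hsub).trans (measure_union_le _ _)
      _ = (volume : Measure Ω) {ω | ∀ i, X ω i ≤ x i} := by
          rw [measure_iUnion_null fun i => sklar_key (hXi i) (hF i) (hFcont i) (x i), add_zero]
  refine ⟨C0, ⟨⟨μ0, hP0, hsupp, hmargs, fun u => rfl⟩, hDeq⟩, ?_⟩
  rintro C' ⟨⟨μ', hprob', hsupp', hmarg', hC'⟩, hD'⟩
  haveI := hprob'
  funext u
  rcases em (∃ i, u i ≤ 0) with ⟨i, hi⟩ | hpos
  · rw [hC' u, copula_zero hmarg' u i hi]
    have h0 : C0 u = 0 := by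
      rw [hC0]
      show (μ0 {v | ∀ j, v j ≤ u j}).toReal = 0
      rw [copula_zero hmargs u i hi]
      simp
    rw [h0]; simp
  · push_neg at hpos
    set w : ℕ → Fin N → ℝ := fun n i => min (u i) (1 - 1/((n:ℝ)+2)) with hwdef
    have hw : ∀ n i, w n i ∈ Ioo (0:ℝ) 1 := by
      intro n i
      constructor
      · apply lt_min (hpos i)
        have h2 : (1:ℝ)/((n:ℝ)+2) ≤ 1/2 := by
          apply one_div_le_one_div_of_le
          · norm_num
          · have := Nat.cast_nonneg (α := ℝ) n; linarith
        linarith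
      · have h3 : (0:ℝ) < 1/((n:ℝ)+2) := by positivity
        calc w n i ≤ 1 - 1/((n:ℝ)+2) := min_le_right _ _
          _ < 1 := by linarith
    have hxc : ∀ n i, ∃ s, F i s = w n i := fun n i =>
      sklar_exists_F_eq (hXi i) (hF i) (hFcont i) (hw n i)
    choose x hx using hxc
    have heq : ∀ n, C' (w n) = C0 (w n) := by
      intro n
      have h1 : (fun i => F i (x n i)) = w n := funext fun i => hx n i
      calc C' (w n) = C' (fun i => F i (x n i)) := by rw [h1]
        _ = D (x n) := (hD' (x n)).symm
        _ = C0 (fun i => F i (x n i)) := hDeq (x n)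
        _ = C0 (w n) := by rw [h1]
    have ht' : Tendsto (fun n => C' (w n)) atTop (𝓝 (C' u)) := by
      have h2 : Tendsto (fun n : ℕ => (μ' {v | ∀ i, v i ≤ w n i}).toReal) atTop
          (𝓝 ((μ' {v | ∀ i, v i ≤ u i}).toReal)) :=
        (ENNReal.tendsto_toReal (measure_ne_top μ' _)).comp (copula_tendsto hmarg' u)
      have h3 : (fun n : ℕ => C' (w n)) = fun n => (μ' {v | ∀ i, v i ≤ w n i}).toReal :=
        funext fun n => hC' (w n)
      rw [h3, hC' u]
      exact h2
    have ht0 : Tendsto (fun n => C0 (w n)) atTop (𝓝 (C0 u)) := by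
      have h2 : Tendsto (fun n : ℕ => (μ0 {v | ∀ i, v i ≤ w n i}).toReal) atTop
          (𝓝 ((μ0 {v | ∀ i, v i ≤ u i}).toReal)) :=
        (ENNReal.tendsto_toReal (measure_ne_top μ0 _)).comp (copula_tendsto hmargs u)
      exact h2
    simp only [heq] at ht'
    exact tendsto_nhds_unique ht' ht0
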